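/- If c_{i,a} ~ Beta((i+m−1)a/N, a − (i+m−1)a/N) (the case 1 ≤ i ≤ m of the Dirichlet aggregation), then E[log((m c_i/N)/c_{i,a})] = log((i+m−1)/N) − ψ(a(i+m−1)/N) + ψ(a), where c_i = (m+i−1)/m, and this quantity tends to 0 when N → ∞, m → ∞, m/N → 0 and a → ∞ with N/(am) → 0. -/

import Mathlib

open MeasureTheory ProbabilityTheory Real Filter

/-- The Beta(α, β) density on ℝ. -/
noncomputable def _root_.betaPDFReal (α β x : ℝ) : ℝ :=
  if 0 < x ∧ x < 1 then
    Real.Gamma (α + β) / (Real.Gamma α * Real.Gamma β) * x ^ (α - 1) * (1 - x) ^ (β - 1)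
  else 0

/-- The Beta(α, β) measure on ℝ. -/
noncomputable def _root_.betaMeasure (α β : ℝ) : Measure ℝ :=
  volume.withDensity fun x => ENNReal.ofReal (_root_.betaPDFReal α β x)

/-- The digamma function ψ = (log ∘ Γ)'. -/
noncomputable def digamma (x : ℝ) : ℝ := deriv (fun y => Real.log (Real.Gamma y)) x

/-- `J` is a Dirichlet(α₁, …, α_N) random vector under `μ`: it is obtained by
normalizing independent Gamma(αᵢ, 1) random variables. -/
def IsDirichlet {Ω : Type*} [MeasurableSpace Ω] (μ : Measure Ω) {N : ℕ}
    (J : Fin N → Ω → ℝ) (α : Fin N → ℝ) : Prop :=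
  ∃ G : Fin N → Ω → ℝ,
    iIndepFun G μ ∧
    (∀ i, Measurable (G i)) ∧
    (∀ i, Measure.map (G i) μ = gammaMeasure (α i) 1) ∧
    ∀ ω i, J i ω = G i ω / ∑ k, G k ω

open Set

lemma hasDerivAt_logGamma {x : ℝ} (hx : 0 < x) :
    HasDerivAt (fun y => Real.log (Real.Gamma y)) (digamma x) x := by
  have hd : DifferentiableAt ℝ Real.Gamma x :=
    Real.differentiableAt_Gamma (fun m => ((neg_nonpos.mpr (Nat.cast_nonneg m)).trans_lt hx).ne')
  have h := hd.hasDerivAt.log (Real.Gamma_pos_of_pos hx).ne'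
  have := h.deriv
  rw [digamma, ← this] at *
  exact h.deriv ▸ h

lemma digamma_rec {x : ℝ} (hx : 0 < x) : digamma (x + 1) = digamma x + 1 / x := by
  have h1 : HasDerivAt (fun y => Real.log (Real.Gamma (y + 1))) (digamma (x + 1)) x := by
    have h := (hasDerivAt_logGamma (show (0:ℝ) < x + 1 by linarith)).comp x ((hasDerivAt_id' x).add_const 1)
    rw [mul_one] at h
    exact h
  have h2 : HasDerivAt (fun y => Real.log y + Real.log (Real.Gamma y)) (1 / x + digamma x) x := by
    have h := (Real.hasDerivAt_log hx.ne').add (hasDerivAt_logGamma hx)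
    rw [one_div]
    exact h
  have heq : (fun y => Real.log (Real.Gamma (y + 1))) =ᶠ[nhds x]
      (fun y => Real.log y + Real.log (Real.Gamma y)) := by
    filter_upwards [eventually_gt_nhds hx] with y hy
    rw [Real.Gamma_add_one hy.ne', Real.log_mul hy.ne' (Real.Gamma_pos_of_pos hy).ne']
  have := h1.congr_of_eventuallyEq heq.symm
  have := this.unique h2
  linarith

lemma digamma_le_log {x : ℝ} (hx : 0 < x) : digamma x ≤ Real.log x := by
  have h := Real.convexOn_log_Gamma.le_slope_of_hasDerivAt (mem_Ioi.mpr hx)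
    (mem_Ioi.mpr (by linarith : (0:ℝ) < x + 1)) (by linarith) (hasDerivAt_logGamma hx)
  rw [slope_def_field] at h
  simp only [Function.comp] at h
  rw [Real.Gamma_add_one hx.ne', Real.log_mul hx.ne' (Real.Gamma_pos_of_pos hx).ne'] at h
  calc digamma x ≤ _ := h
    _ = Real.log x := by field_simp; ring

lemma log_le_digamma_add {x : ℝ} (hx : 0 < x) : Real.log x ≤ digamma x + 1 / x := by
  have h := Real.convexOn_log_Gamma.slope_le_of_hasDerivAt (mem_Ioi.mpr hx)
    (mem_Ioi.mpr (by linarith : (0:ℝ) < x + 1)) (by linarith) (hasDerivAt_logGamma (by linarith))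
  rw [slope_def_field] at h
  simp only [Function.comp] at h
  rw [Real.Gamma_add_one hx.ne', Real.log_mul hx.ne' (Real.Gamma_pos_of_pos hx).ne'] at h
  rw [← digamma_rec hx]
  calc Real.log x = (Real.log x + Real.log (Real.Gamma x) - Real.log (Real.Gamma x)) / (x + 1 - x) := by
        field_simp; ring
    _ ≤ digamma (x+1) := h

lemma complex_eq_real_on_Ioo {s t : ℝ} {x : ℝ} (hx : x ∈ Ioo (0:ℝ) 1) :
    ((x:ℂ) ^ ((s:ℂ) - 1) * (1 - (x:ℂ)) ^ ((t:ℂ) - 1)).re = x ^ (s-1) * (1-x) ^ (t-1) := by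
  rw [show ((s:ℂ) - 1) = ((s-1 : ℝ):ℂ) by push_cast; ring,
      show ((1:ℂ) - (x:ℂ)) = ((1-x : ℝ):ℂ) by push_cast; ring,
      show ((t:ℂ) - 1) = ((t-1 : ℝ):ℂ) by push_cast; ring,
      ← Complex.ofReal_cpow hx.1.le, ← Complex.ofReal_cpow (by linarith [hx.2] : (0:ℝ) ≤ 1 - x),
      ← Complex.ofReal_mul, Complex.ofReal_re]

lemma betaKernel_integrableOn {s t : ℝ} (hs : 0 < s) (ht : 0 < t) :
    IntegrableOn (fun x : ℝ => x ^ (s-1) * (1-x) ^ (t-1)) (Ioo 0 1) := by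
  have h := Complex.betaIntegral_convergent (u := (s:ℂ)) (v := (t:ℂ)) (by simpa) (by simpa)
  rw [intervalIntegrable_iff_integrableOn_Ioc_of_le zero_le_one] at h
  have h2 : IntegrableOn (fun x : ℝ => Complex.re ((x:ℂ) ^ ((s:ℂ) - 1) * (1 - (x:ℂ)) ^ ((t:ℂ) - 1)))
      (Ioc 0 1) := h.re
  exact (h2.mono_set Ioo_subset_Ioc_self).congr_fun
    (fun x hx => complex_eq_real_on_Ioo hx) measurableSet_Ioo

lemma betaKernel_integral {s t : ℝ} (hs : 0 < s) (ht : 0 < t) :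
    ∫ x in Ioo (0:ℝ) 1, x ^ (s-1) * (1-x) ^ (t-1)
      = Real.Gamma s * Real.Gamma t / Real.Gamma (s+t) := by
  have key := Complex.Gamma_mul_Gamma_eq_betaIntegral (s := (s:ℂ)) (t := (t:ℂ))
    (by simpa) (by simpa)
  have hG : Real.Gamma (s+t) ≠ 0 := (Real.Gamma_pos_of_pos (by linarith)).ne'
  have hB : (s:ℂ).betaIntegral (t:ℂ) = ((Real.Gamma s * Real.Gamma t / Real.Gamma (s+t) : ℝ) : ℂ) := by
    have h2 : ((s:ℂ) + t) = ((s + t : ℝ) : ℂ) := by push_cast; ring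
    rw [h2, Complex.Gamma_ofReal, Complex.Gamma_ofReal, Complex.Gamma_ofReal] at key
    have hne : ((Real.Gamma (s+t) : ℝ) : ℂ) ≠ 0 := by exact_mod_cast hG
    push_cast
    rw [eq_div_iff hne]
    linear_combination -key
  have hconv := Complex.betaIntegral_convergent (u := (s:ℂ)) (v := (t:ℂ)) (by simpa) (by simpa)
  rw [intervalIntegrable_iff_integrableOn_Ioc_of_le zero_le_one] at hconv
  have hre := integral_re hconv
  simp only [RCLike.re_to_complex] at hre
  have : ((s:ℂ).betaIntegral (t:ℂ)).re
      = ∫ x in Ioc (0:ℝ) 1, ((x:ℂ) ^ ((s:ℂ) - 1) * (1 - (x:ℂ)) ^ ((t:ℂ) - 1)).re := by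
    rw [Complex.betaIntegral, intervalIntegral.integral_of_le zero_le_one, hre]
  rw [hB, Complex.ofReal_re] at this
  rw [this, integral_Ioc_eq_integral_Ioo]
  exact (setIntegral_congr_fun measurableSet_Ioo fun x hx => (complex_eq_real_on_Ioo hx)).symm

lemma betaKernel_log_integrableOn {s t : ℝ} (hs : 0 < s) (ht : 0 < t) :
    IntegrableOn (fun x : ℝ => |Real.log x| * (x ^ (s-1) * (1-x) ^ (t-1))) (Ioo 0 1) := by
  have hg : IntegrableOn (fun x : ℝ => (2/s) * (x ^ (s/2-1) * (1-x) ^ (t-1))) (Ioo 0 1) :=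
    (betaKernel_integrableOn (half_pos hs) ht).const_mul _
  refine hg.mono' ?_ ?_
  · exact ((Real.measurable_log.abs.mul (by fun_prop)).aestronglyMeasurable)
  · rw [ae_restrict_iff' measurableSet_Ioo]
    refine ae_of_all _ fun x hx => ?_
    obtain ⟨hx0, hx1⟩ := hx
    have h1x : (0:ℝ) ≤ 1 - x := by linarith
    have key : |Real.log x| * x ^ (s-1) ≤ (2/s) * x ^ (s/2-1) := by
      have hy : (0:ℝ) < x ^ (s/2) := Real.rpow_pos_of_pos hx0 _
      have hlog : Real.log (x ^ (s/2)) = (s/2) * Real.log x := Real.log_rpow hx0 _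
      have hle : -Real.log (x ^ (s/2)) * x ^ (s/2) ≤ 1 := by
        have := Real.log_le_sub_one_of_pos (show (0:ℝ) < (x ^ (s/2))⁻¹ by positivity)
        rw [Real.log_inv] at this
        have h2 := mul_le_mul_of_nonneg_right this hy.le
        calc -Real.log (x ^ (s/2)) * x ^ (s/2) ≤ ((x ^ (s/2))⁻¹ - 1) * x ^ (s/2) := h2
          _ ≤ 1 := by rw [sub_mul, inv_mul_cancel₀ hy.ne']; nlinarith
      have habs : |Real.log x| = -Real.log x :=
        abs_of_nonpos (Real.log_nonpos hx0.le hx1.le)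
      have hsplit : x ^ (s-1) = x ^ (s/2) * x ^ (s/2-1) := by
        rw [← Real.rpow_add hx0]; ring_nf
      rw [habs, hsplit]
      have : -Real.log x * x ^ (s/2) ≤ 2/s := by
        rw [hlog] at hle
        have h25 : (0:ℝ) < 2/s := by positivity
        have h3 := mul_le_mul_of_nonneg_left hle h25.le
        calc -Real.log x * x ^ (s/2) = (2/s) * (-(s/2 * Real.log x) * x ^ (s/2)) := by
              field_simp
          _ ≤ (2/s) * 1 := h3
          _ = 2/s := mul_one _
      calc -Real.log x * (x ^ (s/2) * x ^ (s/2-1)) = (-Real.log x * x ^ (s/2)) * x ^ (s/2-1) := by ring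
        _ ≤ (2/s) * x ^ (s/2-1) :=
          mul_le_mul_of_nonneg_right this (Real.rpow_pos_of_pos hx0 _).le
    have hnn : (0:ℝ) ≤ (2/s) * (x ^ (s/2-1) * (1-x) ^ (t-1)) := by positivity
    rw [Real.norm_eq_abs, abs_of_nonneg (by positivity)]
    calc |Real.log x| * (x ^ (s-1) * (1-x) ^ (t-1))
        = (|Real.log x| * x ^ (s-1)) * (1-x) ^ (t-1) := by ring
      _ ≤ ((2/s) * x ^ (s/2-1)) * (1-x) ^ (t-1) :=
          mul_le_mul_of_nonneg_right key (Real.rpow_nonneg h1x _)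
      _ = (2/s) * (x ^ (s/2-1) * (1-x) ^ (t-1)) := by ring


lemma betaKernel_log_integrableOn' {s t : ℝ} (hs : 0 < s) (ht : 0 < t) :
    IntegrableOn (fun x : ℝ => Real.log x * (x ^ (s-1) * (1-x) ^ (t-1))) (Ioo 0 1) := by
  refine (betaKernel_log_integrableOn hs ht).mono'
    (Real.measurable_log.mul (by fun_prop)).aestronglyMeasurable ?_
  rw [ae_restrict_iff' measurableSet_Ioo]
  refine ae_of_all _ fun x hx => ?_
  obtain ⟨hx0, hx1⟩ := hx
  have h1x : (0:ℝ) ≤ 1 - x := by linarith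
  have hk : (0:ℝ) ≤ x ^ (s-1) * (1-x) ^ (t-1) := by positivity
  rw [Real.norm_eq_abs, abs_mul, abs_of_nonneg hk]

lemma beta_log_integral {α β : ℝ} (hα : 0 < α) (hβ : 0 < β) :
    ∫ x in Ioo (0:ℝ) 1, Real.log x * (x ^ (α-1) * (1-x) ^ (β-1))
      = (digamma α - digamma (α+β)) * (Real.Gamma α * Real.Gamma β / Real.Gamma (α+β)) := by
  set μ := volume.restrict (Ioo (0:ℝ) 1) with hμ
  set F : ℝ → ℝ → ℝ := fun τ x => x ^ (τ-1) * (1-x) ^ (β-1) with hF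
  set F' : ℝ → ℝ → ℝ := fun τ x => Real.log x * (x ^ (τ-1) * (1-x) ^ (β-1)) with hF'
  have hmeasF : ∀ τ : ℝ, AEStronglyMeasurable (F τ) μ := fun τ => by
    apply Measurable.aestronglyMeasurable; fun_prop
  have hmeasF' : AEStronglyMeasurable (F' α) μ := by
    apply Measurable.aestronglyMeasurable
    exact Real.measurable_log.mul (by fun_prop)
  have h_bound : ∀ᵐ x ∂μ, ∀ τ ∈ Metric.ball α (α/2),
      ‖F' τ x‖ ≤ |Real.log x| * (x ^ (α/2-1) * (1-x) ^ (β-1)) := by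
    rw [hμ, ae_restrict_iff' measurableSet_Ioo]
    refine ae_of_all _ fun x hx τ hτ => ?_
    obtain ⟨hx0, hx1⟩ := hx
    have hτ2 : α/2 - 1 ≤ τ - 1 := by
      have := abs_lt.mp (by simpa [Real.dist_eq] using hτ)
      linarith [this.1]
    have hpow : x ^ (τ-1) ≤ x ^ (α/2-1) :=
      Real.rpow_le_rpow_of_exponent_ge hx0 hx1.le hτ2
    have h1x : (0:ℝ) ≤ 1 - x := by linarith
    rw [hF', Real.norm_eq_abs, abs_mul, abs_of_nonneg (by positivity : (0:ℝ) ≤ x ^ (τ-1) * (1-x) ^ (β-1))]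
    exact mul_le_mul_of_nonneg_left
      (mul_le_mul_of_nonneg_right hpow (Real.rpow_nonneg h1x _)) (abs_nonneg _)
  have h_diff : ∀ᵐ x ∂μ, ∀ τ ∈ Metric.ball α (α/2), HasDerivAt (fun τ => F τ x) (F' τ x) τ := by
    rw [hμ, ae_restrict_iff' measurableSet_Ioo]
    refine ae_of_all _ fun x hx τ _ => ?_
    obtain ⟨hx0, _⟩ := hx
    have h0 : HasDerivAt (fun τ : ℝ => Real.log x * (τ - 1)) (Real.log x) τ := by
      simpa using ((hasDerivAt_id τ).sub_const 1).const_mul (Real.log x)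
    have h1 := (h0.exp).mul_const ((1-x) ^ (β-1))
    have hfun : (fun τ : ℝ => Real.exp (Real.log x * (τ-1)) * (1-x) ^ (β-1)) = fun τ => F τ x := by
      funext τ; rw [hF]; simp only; rw [Real.rpow_def_of_pos hx0]
    rw [hfun] at h1
    refine h1.congr_deriv ?_
    show _ = Real.log x * (x ^ (τ - 1) * (1-x) ^ (β-1))
    rw [Real.rpow_def_of_pos hx0]; ring
  have key := hasDerivAt_integral_of_dominated_loc_of_deriv_le (Metric.ball_mem_nhds α (half_pos hα))
    (Eventually.of_forall hmeasF) (betaKernel_integrableOn hα hβ) hmeasF' h_bound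
    (betaKernel_log_integrableOn (half_pos hα) hβ) h_diff
  obtain ⟨-, hB⟩ := key
  -- hB : HasDerivAt (fun τ => ∫ x, F τ x ∂μ) (∫ x, F' α x ∂μ) α
  set K := ∫ x, F' α x ∂μ with hK
  have hBval : ∀ τ : ℝ, 0 < τ → (∫ x, F τ x ∂μ)
      = Real.Gamma τ * Real.Gamma β / Real.Gamma (τ+β) := fun τ hτ =>
    betaKernel_integral hτ hβ
  have hBαpos : 0 < Real.Gamma α * Real.Gamma β / Real.Gamma (α+β) := by
    have := Real.Gamma_pos_of_pos hα
    have := Real.Gamma_pos_of_pos hβ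
    have := Real.Gamma_pos_of_pos (show 0 < α+β by linarith)
    positivity
  have hBα : (∫ x, F α x ∂μ) = Real.Gamma α * Real.Gamma β / Real.Gamma (α+β) := hBval α hα
  have h1 : HasDerivAt (fun τ => Real.log (∫ x, F τ x ∂μ))
      (K / (Real.Gamma α * Real.Gamma β / Real.Gamma (α+β))) α := by
    have := hB.log (by rw [hBα]; exact hBαpos.ne')
    rwa [hBα] at this
  have h2 : HasDerivAt (fun τ => Real.log (∫ x, F τ x ∂μ)) (digamma α - digamma (α+β)) α := by
    have hg : HasDerivAt (fun τ => Real.log (Real.Gamma τ) + Real.log (Real.Gamma β)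
        - Real.log (Real.Gamma (τ+β))) (digamma α - digamma (α+β)) α := by
      have ha1 := (hasDerivAt_logGamma hα).add_const (Real.log (Real.Gamma β))
      have ha2 : HasDerivAt (fun τ => Real.log (Real.Gamma (τ+β))) (digamma (α+β)) α := by
        have h := (hasDerivAt_logGamma (show (0:ℝ) < α + β by linarith)).comp
          α ((hasDerivAt_id' α).add_const β)
        rw [mul_one] at h
        exact h
      exact ha1.sub ha2
    refine hg.congr_of_eventuallyEq ?_
    filter_upwards [eventually_gt_nhds hα] with τ hτ
    rw [hBval τ hτ, Real.log_div (by positivity) (Real.Gamma_pos_of_pos (by linarith : (0:ℝ) < τ+β)).ne',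
      Real.log_mul (Real.Gamma_pos_of_pos hτ).ne' (Real.Gamma_pos_of_pos hβ).ne']
  have huniq := h1.unique h2
  rw [div_eq_iff hBαpos.ne'] at huniq
  rw [hμ] at hK
  rw [← hK] at *
  exact huniq

lemma betaPDFReal_nonneg {α β : ℝ} (hα : 0 < α) (hβ : 0 < β) (x : ℝ) :
    0 ≤ _root_.betaPDFReal α β x := by
  rw [_root_.betaPDFReal]
  split_ifs with h
  · obtain ⟨h0, h1⟩ := h
    have g1 := Real.Gamma_pos_of_pos hα
    have g2 := Real.Gamma_pos_of_pos hβ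
    have g3 := Real.Gamma_pos_of_pos (show 0 < α + β by linarith)
    have h1x : (0:ℝ) ≤ 1 - x := by linarith
    positivity
  · exact le_rfl

lemma measurable_betaPDFReal (α β : ℝ) : Measurable (_root_.betaPDFReal α β) := by
  unfold _root_.betaPDFReal
  refine Measurable.ite ?_ ?_ measurable_const
  · have : {x : ℝ | 0 < x ∧ x < 1} = Ioo 0 1 := by ext y; simp [mem_Ioo]
    rw [this]; exact measurableSet_Ioo
  · exact ((measurable_const.mul (by fun_prop)).mul (by fun_prop))

lemma betaPDFReal_eq_on_Ioo {α β x : ℝ} (hx : x ∈ Ioo (0:ℝ) 1) :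
    _root_.betaPDFReal α β x
      = Real.Gamma (α + β) / (Real.Gamma α * Real.Gamma β) * (x ^ (α - 1) * (1 - x) ^ (β - 1)) := by
  rw [_root_.betaPDFReal, if_pos ⟨hx.1, hx.2⟩, mul_assoc]

lemma betaMeasure_integral {α β : ℝ} (hα : 0 < α) (hβ : 0 < β) (g : ℝ → ℝ) :
    ∫ x, g x ∂(_root_.betaMeasure α β) = ∫ x in Ioo (0:ℝ) 1, _root_.betaPDFReal α β x * g x := by
  rw [_root_.betaMeasure]
  have hm : Measurable fun x => (_root_.betaPDFReal α β x).toNNReal :=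
    (_root_.measurable_betaPDFReal α β).real_toNNReal
  rw [show (fun x => ENNReal.ofReal (_root_.betaPDFReal α β x))
      = fun x => ((_root_.betaPDFReal α β x).toNNReal : ENNReal) from rfl]
  rw [integral_withDensity_eq_integral_smul hm]
  have : (fun x => (_root_.betaPDFReal α β x).toNNReal • g x)
      = (Ioo (0:ℝ) 1).indicator (fun x => _root_.betaPDFReal α β x * g x) := by
    funext x
    rw [NNReal.smul_def, Real.coe_toNNReal _ (betaPDFReal_nonneg hα hβ x)]
    by_cases hx : x ∈ Ioo (0:ℝ) 1
    · rw [indicator_of_mem hx, smul_eq_mul]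
    · rw [indicator_of_notMem hx]
      have : _root_.betaPDFReal α β x = 0 := by
        rw [_root_.betaPDFReal, if_neg (by simpa [mem_Ioo] using hx)]
      rw [smul_eq_mul, this, zero_mul]
  rw [this, integral_indicator measurableSet_Ioo]

lemma betaPDF_integrableOn {α β : ℝ} (hα : 0 < α) (hβ : 0 < β) :
    IntegrableOn (_root_.betaPDFReal α β) (Ioo 0 1) := by
  have h := ((betaKernel_integrableOn hα hβ).const_mul
    (Real.Gamma (α + β) / (Real.Gamma α * Real.Gamma β)))
  exact IntegrableOn.congr_fun h (fun x hx => (betaPDFReal_eq_on_Ioo hx).symm) measurableSet_Ioo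

lemma betaPDF_integral {α β : ℝ} (hα : 0 < α) (hβ : 0 < β) :
    ∫ x in Ioo (0:ℝ) 1, _root_.betaPDFReal α β x = 1 := by
  rw [setIntegral_congr_fun measurableSet_Ioo (fun x hx => betaPDFReal_eq_on_Ioo (α := α) (β := β) hx),
    MeasureTheory.integral_const_mul, betaKernel_integral hα hβ]
  have g1 := Real.Gamma_pos_of_pos hα
  have g2 := Real.Gamma_pos_of_pos hβ
  have g3 := Real.Gamma_pos_of_pos (show 0 < α + β by linarith)
  field_simp

lemma betaMeasure_Ioo {α β : ℝ} (hα : 0 < α) (hβ : 0 < β) :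
    _root_.betaMeasure α β (Ioo 0 1) = 1 := by
  rw [_root_.betaMeasure, withDensity_apply _ measurableSet_Ioo]
  rw [← ofReal_integral_eq_lintegral_ofReal (betaPDF_integrableOn hα hβ)
    (ae_of_all _ (betaPDFReal_nonneg hα hβ))]
  rw [betaPDF_integral hα hβ, ENNReal.ofReal_one]

lemma part1 {Ω : Type*} [MeasurableSpace Ω] (Pr : Measure Ω) [IsProbabilityMeasure Pr]
    (N m i : ℕ) (a : ℝ) (ha : 0 < a) (hm : 0 < m) (hmN : 2 * m < N)
    (hi1 : 1 ≤ i) (him : i ≤ m)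
    (c : Ω → ℝ)
    (hc : Measure.map c Pr = _root_.betaMeasure (((i : ℝ) + m - 1) * a / N)
      (a - ((i : ℝ) + m - 1) * a / N)) :
    ∫ ω, Real.log ((m : ℝ) * (((m : ℝ) + i - 1) / m) / N / c ω) ∂Pr
      = Real.log (((i : ℝ) + m - 1) / N) - digamma (a * ((i : ℝ) + m - 1) / N) + digamma a := by
  have hmc : (1:ℝ) ≤ m := by exact_mod_cast hm
  have hic : (1:ℝ) ≤ i := by exact_mod_cast hi1
  have himc : (i:ℝ) ≤ m := by exact_mod_cast him
  have hNc : (2:ℝ) * m < N := by exact_mod_cast hmN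
  have hN : (0:ℝ) < N := by linarith
  have hipm : (0:ℝ) < (i:ℝ) + m - 1 := by linarith
  set α : ℝ := ((i : ℝ) + m - 1) * a / N with hαdef
  set β : ℝ := a - ((i : ℝ) + m - 1) * a / N with hβdef
  have hα : 0 < α := div_pos (mul_pos hipm ha) hN
  have hβ : 0 < β := by
    rw [hβdef, sub_pos, div_lt_iff₀ hN]
    nlinarith
  have hab : α + β = a := by rw [hαdef, hβdef]; ring
  set C : ℝ := (m : ℝ) * (((m : ℝ) + i - 1) / m) / N with hCdef
  have hCeq : C = ((i:ℝ) + m - 1) / N := by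
    rw [hCdef]; field_simp; ring
  have hC : 0 < C := by rw [hCeq]; exact div_pos hipm hN
  have hgm : Measurable fun x : ℝ => Real.log (C / x) :=
    Real.measurable_log.comp (measurable_const.div measurable_id)
  have hmap : AEMeasurable c Pr := by
    by_contra h
    rw [Measure.map_of_not_aemeasurable h] at hc
    have h1 := betaMeasure_Ioo hα hβ
    rw [← hc] at h1
    simp at h1
  have hint : ∫ ω, Real.log (C / c ω) ∂Pr = ∫ x, Real.log (C / x) ∂(_root_.betaMeasure α β) := by
    have := integral_map (φ := c) hmap hgm.aestronglyMeasurable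
    rw [hc] at this
    exact this.symm
  have g1 := Real.Gamma_pos_of_pos hα
  have g2 := Real.Gamma_pos_of_pos hβ
  have g3 := Real.Gamma_pos_of_pos (show 0 < α + β by linarith)
  set K : ℝ := Real.Gamma (α + β) / (Real.Gamma α * Real.Gamma β) with hKdef
  have hKpos : 0 < K := by positivity
  have hKB : K * (Real.Gamma α * Real.Gamma β / Real.Gamma (α+β)) = 1 := by
    rw [hKdef]; field_simp
  have hmain : ∫ x, Real.log (C / x) ∂(_root_.betaMeasure α β)
      = Real.log C - (digamma α - digamma (α+β)) := by
    rw [betaMeasure_integral hα hβ]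
    have hcong : ∫ x in Ioo (0:ℝ) 1, _root_.betaPDFReal α β x * Real.log (C / x)
        = ∫ x in Ioo (0:ℝ) 1,
          ((K * Real.log C) * (x ^ (α-1) * (1-x) ^ (β-1))
            - K * (Real.log x * (x ^ (α-1) * (1-x) ^ (β-1)))) := by
      refine setIntegral_congr_fun measurableSet_Ioo fun x hx => ?_
      rw [betaPDFReal_eq_on_Ioo hx, Real.log_div hC.ne' hx.1.ne']
      rw [hKdef]; ring
    rw [hcong, integral_sub (((betaKernel_integrableOn hα hβ).const_mul _))
      (((betaKernel_log_integrableOn' hα hβ).const_mul _)),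
      MeasureTheory.integral_const_mul, MeasureTheory.integral_const_mul,
      betaKernel_integral hα hβ, beta_log_integral hα hβ]
    have : K * Real.log C * (Real.Gamma α * Real.Gamma β / Real.Gamma (α+β))
        = Real.log C * (K * (Real.Gamma α * Real.Gamma β / Real.Gamma (α+β))) := by ring
    rw [this, hKB]
    have : K * ((digamma α - digamma (α+β)) * (Real.Gamma α * Real.Gamma β / Real.Gamma (α+β)))
        = (digamma α - digamma (α+β)) * (K * (Real.Gamma α * Real.Gamma β / Real.Gamma (α+β))) := by
      ring
    rw [this, hKB, mul_one, mul_one]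
  rw [hint, hmain, hCeq, hab]
  have harg : α = a * ((i:ℝ) + m - 1) / N := by rw [hαdef]; ring
  rw [← harg]
  ring

lemma part2 (Nseq mseq iseq : ℕ → ℕ) (aseq : ℕ → ℝ)
    (hiseq : ∀ k, 1 ≤ iseq k ∧ iseq k ≤ mseq k)
    (hNseq : Tendsto (fun k => (Nseq k : ℝ)) atTop atTop)
    (hmseq : Tendsto (fun k => (mseq k : ℝ)) atTop atTop)
    (hmNseq : Tendsto (fun k => (mseq k : ℝ) / Nseq k) atTop (nhds 0))
    (haseq : Tendsto aseq atTop atTop)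
    (hNamseq : Tendsto (fun k => (Nseq k : ℝ) / (aseq k * mseq k)) atTop (nhds 0)) :
    Tendsto (fun k =>
        Real.log (((iseq k : ℝ) + mseq k - 1) / Nseq k)
          - digamma (aseq k * ((iseq k : ℝ) + mseq k - 1) / Nseq k) + digamma (aseq k))
      atTop (nhds 0) := by
  set x : ℕ → ℝ := fun k => ((iseq k : ℝ) + mseq k - 1) / Nseq k with hx
  have hev : ∀ᶠ k in atTop, 1 ≤ (Nseq k : ℝ) ∧ 1 ≤ (mseq k : ℝ) ∧ 1 ≤ aseq k := by
    filter_upwards [hNseq.eventually_ge_atTop 1, hmseq.eventually_ge_atTop 1,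
      haseq.eventually_ge_atTop 1] with k h1 h2 h3
    exact ⟨h1, h2, h3⟩
  have hxpos : ∀ᶠ k in atTop, 0 < x k := by
    filter_upwards [hev] with k ⟨h1, h2, _⟩
    have hi : (1:ℝ) ≤ (iseq k : ℝ) := by exact_mod_cast (hiseq k).1
    have : (0:ℝ) < (iseq k : ℝ) + mseq k - 1 := by linarith
    positivity
  have h1 : Tendsto (fun k => aseq k * mseq k / Nseq k) atTop atTop := by
    have hpos : ∀ᶠ k in atTop, (Nseq k : ℝ) / (aseq k * mseq k) ∈ Ioi (0:ℝ) := by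
      filter_upwards [hev] with k ⟨h1, h2, h3⟩
      have : (0:ℝ) < aseq k * mseq k := by nlinarith
      exact mem_Ioi.mpr (by positivity)
    have := (show Tendsto _ atTop (nhdsWithin (0:ℝ) (Ioi 0)) from tendsto_nhdsWithin_iff.mpr ⟨hNamseq, hpos⟩).inv_tendsto_nhdsGT_zero
    simpa [Pi.inv_def, inv_div] using this
  have haxk : Tendsto (fun k => aseq k * x k) atTop atTop := by
    refine tendsto_atTop_mono' atTop ?_ h1
    filter_upwards [hev] with k ⟨hN1, hm1, ha1⟩
    have hi : (1:ℝ) ≤ (iseq k : ℝ) := by exact_mod_cast (hiseq k).1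
    have hN0 : (0:ℝ) < Nseq k := by linarith
    show aseq k * mseq k / Nseq k ≤ aseq k * (((iseq k : ℝ) + mseq k - 1) / Nseq k)
    rw [mul_div_assoc]
    have h2 : (mseq k : ℝ)/Nseq k ≤ ((iseq k : ℝ) + mseq k - 1)/Nseq k := by
      gcongr
      linarith
    exact mul_le_mul_of_nonneg_left h2 (by linarith)
  set A : ℕ → ℝ := fun k => Real.log (aseq k * x k) - digamma (aseq k * x k) with hA
  set B : ℕ → ℝ := fun k => Real.log (aseq k) - digamma (aseq k) with hB
  have hApos : ∀ᶠ k in atTop, 0 < aseq k * x k := haxk.eventually_gt_atTop 0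
  have hAt : Tendsto A atTop (nhds 0) := by
    apply squeeze_zero' (t₀ := atTop) (g := fun k => (aseq k * x k)⁻¹)
    · filter_upwards [hApos] with k hk
      simp only [hA, sub_nonneg]
      exact digamma_le_log hk
    · filter_upwards [hApos] with k hk
      have := log_le_digamma_add hk
      simp only [hA]
      rw [one_div] at this
      linarith
    · exact (tendsto_inv_atTop_zero).comp haxk
  have hBpos : ∀ᶠ k in atTop, 0 < aseq k := haseq.eventually_gt_atTop 0
  have hBt : Tendsto B atTop (nhds 0) := by
    apply squeeze_zero' (t₀ := atTop) (g := fun k => (aseq k)⁻¹)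
    · filter_upwards [hBpos] with k hk
      simp only [hB, sub_nonneg]
      exact digamma_le_log hk
    · filter_upwards [hBpos] with k hk
      have := log_le_digamma_add hk
      simp only [hB]
      rw [one_div] at this
      linarith
    · exact (tendsto_inv_atTop_zero).comp haseq
  have := hAt.sub hBt
  rw [sub_zero] at this
  refine Tendsto.congr' ?_ this
  filter_upwards [hxpos, hBpos, hev] with k hxk hak ⟨hN1, _, _⟩
  have hN0 : (0:ℝ) < Nseq k := by linarith
  simp only [hA, hB]
  have hlog : Real.log (aseq k * x k) = Real.log (aseq k) + Real.log (x k) :=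
    Real.log_mul hak.ne' hxk.ne'
  have harg : aseq k * ((iseq k : ℝ) + mseq k - 1) / Nseq k = aseq k * x k := by
    rw [hx, mul_div_assoc]
  rw [harg, hlog]
  ring

/-- Case 1 ≤ i ≤ m: if c_{i,a} ~ Beta((i+m-1)a/N, a - (i+m-1)a/N) then, with
cᵢ = (m+i-1)/m, E[log((m cᵢ/N)/c_{i,a})] = log((i+m-1)/N) - ψ(a(i+m-1)/N) + ψ(a),
and this quantity tends to 0 when N → ∞, m → ∞, m/N → 0, a → ∞ and N/(am) → 0. -/
theorem stmt12 {Ω : Type*} [MeasurableSpace Ω] (Pr : Measure Ω) [IsProbabilityMeasure Pr]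
    (N m i : ℕ) (a : ℝ) (ha : 0 < a) (hm : 0 < m) (hmN : 2 * m < N)
    (hi1 : 1 ≤ i) (him : i ≤ m)
    (c : Ω → ℝ)
    (hc : Measure.map c Pr = _root_.betaMeasure (((i : ℝ) + m - 1) * a / N)
      (a - ((i : ℝ) + m - 1) * a / N))
    (Nseq mseq iseq : ℕ → ℕ) (aseq : ℕ → ℝ)
    (hiseq : ∀ k, 1 ≤ iseq k ∧ iseq k ≤ mseq k)
    (hNseq : Tendsto (fun k => (Nseq k : ℝ)) atTop atTop)
    (hmseq : Tendsto (fun k => (mseq k : ℝ)) atTop atTop)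
    (hmNseq : Tendsto (fun k => (mseq k : ℝ) / Nseq k) atTop (nhds 0))
    (haseq : Tendsto aseq atTop atTop)
    (hNamseq : Tendsto (fun k => (Nseq k : ℝ) / (aseq k * mseq k)) atTop (nhds 0)) :
    (∫ ω, Real.log ((m : ℝ) * (((m : ℝ) + i - 1) / m) / N / c ω) ∂Pr
      = Real.log (((i : ℝ) + m - 1) / N) - digamma (a * ((i : ℝ) + m - 1) / N) + digamma a) ∧
    Tendsto (fun k =>
        Real.log (((iseq k : ℝ) + mseq k - 1) / Nseq k)
          - digamma (aseq k * ((iseq k : ℝ) + mseq k - 1) / Nseq k) + digamma (aseq k))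
      atTop (nhds 0) :=
  ⟨part1 Pr N m i a ha hm hmN hi1 him c hc,
   part2 Nseq mseq iseq aseq hiseq hNseq hmseq hmNseq haseq hNamseq⟩
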